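/- Let C be a triangulated category and let X, Y be Σ-stable full additive subcategories closed under direct summands. Suppose: (a) X is contravariantly finite and Y is covariantly finite; (b) every object M admits an X-resolution that is Hom(-,Y)-exact; (c) every object N admits a Y-coresolution that is Hom(X,-)-exact. Then ξ_X = ξ^Y, i.e. a distinguished triangle is Hom(X,-)-exact if and only if it is Hom(-,Y)-exact. -/

import Mathlib

open CategoryTheory CategoryTheory.Limits CategoryTheory.Pretriangulated

variable {C : Type*} [Category C] [Preadditive C] [HasZeroObject C] [HasShift C ℤ]
  [∀ n : ℤ, (shiftFunctor C n).Additive] [Pretriangulated C] [HasBinaryBiproducts C]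

lemma memShiftNeg (Y : Set C)
    (hYshift : ∀ A : C, A ∈ Y ↔ (A⟦(1 : ℤ)⟧) ∈ Y)
    (hYsummand : ∀ (P Q : C), Q ∈ Y → ∀ (s : P ⟶ Q) (r : Q ⟶ P), s ≫ r = 𝟙 P → P ∈ Y)
    {Y' : C} (hY' : Y' ∈ Y) : (Y'⟦(-1 : ℤ)⟧) ∈ Y := by
  rw [hYshift]
  exact hYsummand _ _ hY' ((shiftEquiv C (1 : ℤ)).counitIso.hom.app Y')
    ((shiftEquiv C (1 : ℤ)).counitIso.inv.app Y') (Iso.hom_inv_id_app _ _)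

-- Ghost ⇒ Coghost, using one step of a Hom(-,Y)-exact X-resolution of M.
lemma ghost_to_coghost (Y : Set C)
    (hYshift : ∀ A : C, A ∈ Y ↔ (A⟦(1 : ℤ)⟧) ∈ Y)
    (hYsummand : ∀ (P Q : C), Q ∈ Y → ∀ (s : P ⟶ Q) (r : Q ⟶ P), s ≫ r = 𝟙 P → P ∈ Y)
    {K₁ X₀ M : C} {g₀ : K₁ ⟶ X₀} {f₀ : X₀ ⟶ M} {h₀ : M ⟶ K₁⟦(1 : ℤ)⟧}
    (hT : Triangle.mk g₀ f₀ h₀ ∈ distTriang C)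
    (hex : ∀ Y' ∈ Y, Function.Surjective (fun u : X₀ ⟶ Y' => g₀ ≫ u))
    {N : C} (φ : M ⟶ N) (hφ : f₀ ≫ φ = 0)
    {Y' : C} (hY' : Y' ∈ Y) (v : N ⟶ Y') : φ ≫ v = 0 := by
  obtain ⟨b, hb⟩ := Triangle.yoneda_exact₃ _ hT (φ ≫ v)
    (by erw [Triangle.mk_mor₂, ← Category.assoc, hφ, Limits.zero_comp])
  -- b : K₁⟦1⟧ ⟶ Y'
  obtain ⟨b₀, hb₀⟩ := (shiftFunctor C (1 : ℤ)).map_surjective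
    (b ≫ (shiftEquiv C (1 : ℤ)).counitIso.inv.app Y')
  have hbb : b = b₀⟦(1 : ℤ)⟧' ≫ (shiftEquiv C (1 : ℤ)).counitIso.hom.app Y' := by
    erw [hb₀, Category.assoc, Iso.inv_hom_id_app]; exact (Category.comp_id b).symm
  obtain ⟨t, ht⟩ := hex _ (memShiftNeg Y hYshift hYsummand hY') b₀
  simp only at ht
  have hz : h₀ ≫ g₀⟦(1 : ℤ)⟧' = 0 := comp_distTriang_mor_zero₃₁ _ hT
  calc φ ≫ v = h₀ ≫ b := hb
    _ = h₀ ≫ g₀⟦(1 : ℤ)⟧' ≫ t⟦(1 : ℤ)⟧' ≫ (shiftEquiv C (1 : ℤ)).counitIso.hom.app Y' := by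
        erw [hbb, ← ht, Functor.map_comp, Category.assoc]; rfl
    _ = 0 := by rw [← Category.assoc, hz, Limits.zero_comp]

-- Coghost ⇒ Ghost, using one step of a Hom(X,-)-exact Y-coresolution of N.
lemma coghost_to_ghost (X : Set C)
    (hXshift : ∀ A : C, A ∈ X ↔ (A⟦(1 : ℤ)⟧) ∈ X)
    {N Y₀ K₁ : C} {f₀ : N ⟶ Y₀} {g₀ : Y₀ ⟶ K₁} {h₀ : K₁ ⟶ N⟦(1 : ℤ)⟧}
    (hT : Triangle.mk f₀ g₀ h₀ ∈ distTriang C)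
    (hex : ∀ X' ∈ X, Function.Surjective (fun u : X' ⟶ Y₀ => u ≫ g₀))
    {M : C} (φ : M ⟶ N) (hφ : φ ≫ f₀ = 0)
    {X' : C} (hX' : X' ∈ X) (w : X' ⟶ M) : w ≫ φ = 0 := by
  have hT' := inv_rot_of_distTriang _ hT
  obtain ⟨c, hc⟩ := Triangle.coyoneda_exact₂ _ hT' (w ≫ φ)
    (by dsimp [Triangle.invRotate]; erw [Category.assoc, hφ, Limits.comp_zero]; rfl)
  -- c : X' ⟶ K₁⟦-1⟧,  w ≫ φ = c ≫ (-(h₀⟦-1⟧') ≫ unit⁻¹)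
  obtain ⟨c₁, hc₁⟩ := (shiftFunctor C (-1 : ℤ)).map_surjective
    ((shiftEquiv C (1 : ℤ)).unitIso.inv.app X' ≫ c)
  have hcc : c = (shiftEquiv C (1 : ℤ)).unitIso.hom.app X' ≫ c₁⟦(-1 : ℤ)⟧' := by
    erw [hc₁, ← Category.assoc, Iso.hom_inv_id_app, Category.id_comp]
  obtain ⟨t, ht⟩ := hex _ ((hXshift X').mp hX') c₁
  simp only at ht
  have hz : c₁ ≫ h₀ = 0 := by
    have h23 : g₀ ≫ h₀ = 0 := comp_distTriang_mor_zero₂₃ _ hT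
    erw [← ht, Category.assoc, h23, Limits.comp_zero]
  erw [hc]
  dsimp [Triangle.invRotate]
  rw [hcc]
  erw [Triangle.mk_mor₁, Preadditive.comp_neg, neg_eq_zero, Category.assoc]
  erw [← Category.assoc (c₁⟦(-1:ℤ)⟧'), ← Functor.map_comp, hz, Functor.map_zero,
    Limits.zero_comp, Limits.comp_zero]; rfl
-- Hom(-,Y)-surjectivity of mor₁ implies mor₃ is a Y-coghost.
lemma surj_to_coghost (Y : Set C)
    (hYshift : ∀ A : C, A ∈ Y ↔ (A⟦(1 : ℤ)⟧) ∈ Y)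
    (hYsummand : ∀ (P Q : C), Q ∈ Y → ∀ (s : P ⟶ Q) (r : Q ⟶ P), s ≫ r = 𝟙 P → P ∈ Y)
    {T : Triangle C} (hT : T ∈ distTriang C)
    (h2 : ∀ Y' ∈ Y, Function.Surjective (fun u : T.obj₂ ⟶ Y' => T.mor₁ ≫ u))
    {Y' : C} (hY' : Y' ∈ Y) (v : T.obj₁⟦(1 : ℤ)⟧ ⟶ Y') : T.mor₃ ≫ v = 0 := by
  obtain ⟨v₀, hv₀⟩ := (shiftFunctor C (1 : ℤ)).map_surjective
    (v ≫ (shiftEquiv C (1 : ℤ)).counitIso.inv.app Y')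
  have hv : v = v₀⟦(1 : ℤ)⟧' ≫ (shiftEquiv C (1 : ℤ)).counitIso.hom.app Y' := by
    erw [hv₀, Category.assoc, Iso.inv_hom_id_app]; exact (Category.comp_id v).symm
  obtain ⟨u, hu⟩ := h2 _ (memShiftNeg Y hYshift hYsummand hY') v₀
  simp only at hu
  have hz : T.mor₃ ≫ T.mor₁⟦(1 : ℤ)⟧' = 0 := comp_distTriang_mor_zero₃₁ _ hT
  erw [hv, ← hu, Functor.map_comp, ← Category.assoc, ← Category.assoc, reassoc_of% hz]
  simp
  exact Limits.zero_comp

-- If mor₃ is a Y-coghost then every map obj₁ ⟶ Y' factors through mor₁.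
lemma coghost_to_surj (Y : Set C)
    (hYshift : ∀ A : C, A ∈ Y ↔ (A⟦(1 : ℤ)⟧) ∈ Y)
    {T : Triangle C} (hT : T ∈ distTriang C)
    (hco : ∀ Y' ∈ Y, ∀ v : T.obj₁⟦(1 : ℤ)⟧ ⟶ Y', T.mor₃ ≫ v = 0)
    {Y' : C} (hY' : Y' ∈ Y) (v : T.obj₁ ⟶ Y') : ∃ u : T.obj₂ ⟶ Y', T.mor₁ ≫ u = v := by
  have hT' := inv_rot_of_distTriang _ hT
  obtain ⟨s, hs⟩ := (shiftFunctor C (-1 : ℤ)).map_surjective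
    ((shiftEquiv C (1 : ℤ)).unitIso.inv.app T.obj₁ ≫ v ≫
      (shiftEquiv C (1 : ℤ)).unitIso.hom.app Y')
  have hzs : T.mor₃ ≫ s = 0 := hco _ ((hYshift Y').mp hY') s
  have key : T.mor₃⟦(-1 : ℤ)⟧' ≫ ((shiftEquiv C (1 : ℤ)).unitIso.inv.app T.obj₁ ≫ v ≫
      (shiftEquiv C (1 : ℤ)).unitIso.hom.app Y') = 0 := by
    erw [← hs, ← Functor.map_comp, hzs, Functor.map_zero]; rfl
  have hm : T.invRotate.mor₁ ≫ v = 0 := by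
    dsimp [Triangle.invRotate]
    erw [Triangle.mk_mor₁, Preadditive.neg_comp, neg_eq_zero, Category.assoc]
    rw [← cancel_mono ((shiftEquiv C (1 : ℤ)).unitIso.hom.app Y')]
    erw [Limits.zero_comp, Category.assoc, Category.assoc]; exact key
  obtain ⟨u, hu⟩ := Triangle.yoneda_exact₂ _ hT' v hm
  exact ⟨u, hu.symm⟩
theorem stmt_13 (X Y : Set C)
    (hXzero : ∀ Z : C, IsZero Z → Z ∈ X) (hXadd : ∀ A B : C, A ∈ X → B ∈ X → (A ⊞ B) ∈ X)
    (hXshift : ∀ A : C, A ∈ X ↔ (A⟦(1 : ℤ)⟧) ∈ X)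
    (hXsummand : ∀ (P Q : C), Q ∈ X → ∀ (s : P ⟶ Q) (r : Q ⟶ P), s ≫ r = 𝟙 P → P ∈ X)
    (hYzero : ∀ Z : C, IsZero Z → Z ∈ Y) (hYadd : ∀ A B : C, A ∈ Y → B ∈ Y → (A ⊞ B) ∈ Y)
    (hYshift : ∀ A : C, A ∈ Y ↔ (A⟦(1 : ℤ)⟧) ∈ Y)
    (hYsummand : ∀ (P Q : C), Q ∈ Y → ∀ (s : P ⟶ Q) (r : Q ⟶ P), s ≫ r = 𝟙 P → P ∈ Y)
    -- (a) X is contravariantly finite and Y is covariantly finite: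
    (hcf : ∀ Z : C, ∃ X' ∈ X, ∃ f : X' ⟶ Z,
      ∀ X'' ∈ X, ∀ u : X'' ⟶ Z, ∃ v : X'' ⟶ X', v ≫ f = u)
    (hcov : ∀ Z : C, ∃ Y' ∈ Y, ∃ f : Z ⟶ Y',
      ∀ Y'' ∈ Y, ∀ u : Z ⟶ Y'', ∃ v : Y' ⟶ Y'', f ≫ v = u)
    -- (b) every object has a Hom(-,Y)-exact X-resolution:
    (hres : ∀ M : C, ∃ (K Xs : ℕ → C) (g : ∀ n, K (n + 1) ⟶ Xs n) (f : ∀ n, Xs n ⟶ K n)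
      (h : ∀ n, K n ⟶ (K (n + 1))⟦(1 : ℤ)⟧),
      K 0 = M ∧ (∀ n, Xs n ∈ X) ∧
      ∀ n, Triangle.mk (g n) (f n) (h n) ∈ (distTriang C) ∧
        (∀ X' ∈ X, Function.Surjective (fun u : X' ⟶ Xs n => u ≫ f n)) ∧
        (∀ Y' ∈ Y, Function.Surjective (fun u : Xs n ⟶ Y' => g n ≫ u)))
    -- (c) every object has a Hom(X,-)-exact Y-coresolution:
    (hcores : ∀ N : C, ∃ (K Ys : ℕ → C) (f : ∀ n, K n ⟶ Ys n) (g : ∀ n, Ys n ⟶ K (n + 1))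
      (h : ∀ n, K (n + 1) ⟶ (K n)⟦(1 : ℤ)⟧),
      K 0 = N ∧ (∀ n, Ys n ∈ Y) ∧
      ∀ n, Triangle.mk (f n) (g n) (h n) ∈ (distTriang C) ∧
        (∀ Y' ∈ Y, Function.Surjective (fun u : Ys n ⟶ Y' => f n ≫ u)) ∧
        (∀ X' ∈ X, Function.Surjective (fun u : X' ⟶ Ys n => u ≫ g n))) :
    ∀ T ∈ (distTriang C),
      ((∀ X' ∈ X, Function.Surjective (fun u : X' ⟶ T.obj₂ => u ≫ T.mor₂)) ↔
       (∀ Y' ∈ Y, Function.Surjective (fun u : T.obj₂ ⟶ Y' => T.mor₁ ≫ u))) := by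
  intro T hT
  constructor
  · -- Hom(X,-)-exact ⇒ Hom(-,Y)-exact
    intro h1 Y' hY' v
    -- mor₃ is an X-ghost:
    have hghost : ∀ X'' ∈ X, ∀ w : X'' ⟶ T.obj₃, w ≫ T.mor₃ = 0 := by
      intro X'' hX'' w
      obtain ⟨u, hu⟩ := h1 X'' hX'' w
      simp only at hu
      rw [← hu, Category.assoc, comp_distTriang_mor_zero₂₃ _ hT, Limits.comp_zero]
    -- hence mor₃ is a Y-coghost, using a Hom(-,Y)-exact X-resolution of T.obj₃:
    obtain ⟨K, Xs, g, f, h, hK0, hXmem, hprops⟩ := hres T.obj₃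
    obtain ⟨hdist, hXexact, hYexact⟩ := hprops 0
    have hco : ∀ Y'' ∈ Y, ∀ v' : T.obj₁⟦(1 : ℤ)⟧ ⟶ Y'', T.mor₃ ≫ v' = 0 := by
      intro Y'' hY'' v'
      have hφ : f 0 ≫ (eqToHom hK0 ≫ T.mor₃) = 0 := by
        rw [← Category.assoc]
        exact hghost _ (hXmem 0) (f 0 ≫ eqToHom hK0)
      have hz := ghost_to_coghost Y hYshift hYsummand hdist hYexact
        (eqToHom hK0 ≫ T.mor₃) hφ hY'' v'
      rw [← cancel_epi (eqToHom hK0), Limits.comp_zero, ← Category.assoc]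
      rw [Category.assoc] at hz
      rw [← Category.assoc] at hz
      exact hz
    obtain ⟨u, hu⟩ := coghost_to_surj Y hYshift hT hco hY' v
    exact ⟨u, hu⟩
  · -- Hom(-,Y)-exact ⇒ Hom(X,-)-exact
    intro h2 X' hX' w
    have hco : ∀ Y'' ∈ Y, ∀ v : T.obj₁⟦(1 : ℤ)⟧ ⟶ Y'', T.mor₃ ≫ v = 0 :=
      fun Y'' hY'' v => surj_to_coghost Y hYshift hYsummand hT h2 hY'' v
    obtain ⟨K, Ys, f, g, h, hK0, hYmem, hprops⟩ := hcores (T.obj₁⟦(1 : ℤ)⟧)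
    obtain ⟨hdist, hYexact, hXexact⟩ := hprops 0
    have hφ : (T.mor₃ ≫ eqToHom hK0.symm) ≫ f 0 = 0 := by
      rw [Category.assoc]
      exact hco _ (hYmem 0) (eqToHom hK0.symm ≫ f 0)
    have hz := coghost_to_ghost X hXshift hdist hXexact
      (T.mor₃ ≫ eqToHom hK0.symm) hφ hX' w
    have hw3 : w ≫ T.mor₃ = 0 := by
      rw [← cancel_mono (eqToHom hK0.symm), Limits.zero_comp, Category.assoc]
      exact hz
    obtain ⟨u, hu⟩ := Triangle.coyoneda_exact₃ _ hT w hw3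
    exact ⟨u, hu.symm⟩
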